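/- Let a₁, b₁, c₁, d₁, a₋₁, b₋₁, c₋₁, d₋₁ be nonnegative real numbers, let p ∈ (0,1), and set a = a₁+a₋₁, b = b₁+b₋₁, c = c₁+c₋₁, d = d₁+d₋₁, g = 2(a₁+c₁)+b₁+d₁+a₋₁+c₋₁, h = 2(a₁+b₁)+c₁+d₁+a₋₁+b₋₁. Assume g > 0, h > 0, 2a+b+c > 0, (a+b)(b+d)+(a+c)(c+d) > 0, a > 0, and a₁/(a₁+a₋₁) = p. Define K = 2(ad−bc)/((a+b)(b+d)+(a+c)(c+d)), F̃_t = 2(a₁+c₁)/g, F̃_{t−1} = 2(a₁+b₁)/h, and ΔF = F̃_t − F̃_{t−1}. Let T > 0. If K > T, then |ΔF| ≤ 4(1−T)/((p+1)T). -/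

import Mathlib

set_option maxHeartbeats 1000000 in
lemma key_ineq (a1 b1 c1 d1 am1 bm1 cm1 dm1 : ℝ)
    (ha1 : 0 ≤ a1) (hb1 : 0 ≤ b1) (hc1 : 0 ≤ c1) (hd1 : 0 ≤ d1)
    (ham1 : 0 ≤ am1) (hbm1 : 0 ≤ bm1) (hcm1 : 0 ≤ cm1) (hdm1 : 0 ≤ dm1)
    (hbc : 0 ≤ (a1+am1)*(d1+dm1) - (b1+bm1)*(c1+cm1)) :
    ((a1+c1)*(2*(a1+b1)+c1+d1+am1+bm1) - (a1+b1)*(2*(a1+c1)+b1+d1+am1+cm1))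
      * (2*a1+am1) * ((a1+am1)*(d1+dm1) - (b1+bm1)*(c1+cm1))
    ≤ ((b1+bm1)+(c1+cm1)) * ((a1+am1)+(b1+bm1)+(c1+cm1)+(d1+dm1)) * (a1+am1)
      * (2*(a1+c1)+b1+d1+am1+cm1) * (2*(a1+b1)+c1+d1+am1+bm1) := by
  set g := 2*(a1+c1)+b1+d1+am1+cm1 with hgdef
  set h := 2*(a1+b1)+c1+d1+am1+bm1 with hhdef
  set N := (a1+c1)*h - (a1+b1)*g with hNdef
  set u := a1+c1+d1+am1+bm1 with hudef
  have hg0 : 0 ≤ g := by simp only [hgdef]; positivity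
  have hh0 : 0 ≤ h := by simp only [hhdef]; positivity
  have hbc' : (0:ℝ) ≤ b1+bm1+(c1+cm1) := by positivity
  have hn0 : (0:ℝ) ≤ (a1+am1)+(b1+bm1)+(c1+cm1)+(d1+dm1) := by positivity
  rcases le_or_gt N 0 with hN | hN
  · have hles : N * (2*a1+am1) * ((a1+am1)*(d1+dm1) - (b1+bm1)*(c1+cm1)) ≤ 0 := by
      apply mul_nonpos_of_nonpos_of_nonneg _ hbc
      exact mul_nonpos_of_nonpos_of_nonneg hN (by linarith)
    have hrhs : 0 ≤ ((b1+bm1)+(c1+cm1)) * ((a1+am1)+(b1+bm1)+(c1+cm1)+(d1+dm1)) * (a1+am1) * g * h := by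
      have := mul_nonneg (mul_nonneg (mul_nonneg (mul_nonneg hbc' hn0) (by positivity : (0:ℝ) ≤ a1+am1)) hg0) hh0
      linarith
    linarith
  · have hNu : N ≤ (c1+bm1) * u := by
      simp only [hNdef, hhdef, hgdef, hudef]
      nlinarith [mul_nonneg hbm1 (add_nonneg (add_nonneg (add_nonneg hc1 hd1) ham1) hbm1),
        mul_nonneg hb1 (by positivity : (0:ℝ) ≤ a1+b1+d1+am1+cm1), mul_nonneg ha1 hcm1]
    have hA : (a1+am1)*(d1+dm1) - (b1+bm1)*(c1+cm1) ≤ (a1+am1)*(d1+dm1) := by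
      nlinarith [mul_nonneg (add_nonneg hb1 hbm1) (add_nonneg hc1 hcm1)]
    have h3 : (2*a1+am1)*d1 ≤ g*h := by
      simp only [hgdef, hhdef]; nlinarith [mul_nonneg ha1 hd1, mul_nonneg ham1 hd1]
    have h4 : u*(2*a1+am1) ≤ g*h := by
      simp only [hgdef, hhdef, hudef]; nlinarith
    have h5 : (0:ℝ) ≤ c1+bm1 := by positivity
    have h6 : (0:ℝ) ≤ u := by simp only [hudef]; positivity
    have h7 : (0:ℝ) ≤ 2*a1+am1 := by linarith
    have hcb : c1+bm1 ≤ (b1+bm1)+(c1+cm1) := by linarith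
    have step1 : N*(2*a1+am1)*((a1+am1)*(d1+dm1) - (b1+bm1)*(c1+cm1))
        ≤ (c1+bm1)*u*(2*a1+am1)*((a1+am1)*(d1+dm1)) := by
      have e1 : N*(2*a1+am1) ≤ (c1+bm1)*u*(2*a1+am1) :=
        mul_le_mul_of_nonneg_right hNu h7
      have e0 : 0 ≤ N*(2*a1+am1) := mul_nonneg hN.le h7
      calc N*(2*a1+am1)*((a1+am1)*(d1+dm1) - (b1+bm1)*(c1+cm1))
          ≤ N*(2*a1+am1)*((a1+am1)*(d1+dm1)) := mul_le_mul_of_nonneg_left hA e0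
        _ ≤ (c1+bm1)*u*(2*a1+am1)*((a1+am1)*(d1+dm1)) :=
            mul_le_mul_of_nonneg_right e1 (by positivity)
    have key1 : (c1+bm1)*u*((2*a1+am1)*d1) ≤ ((b1+bm1)+(c1+cm1))*u*(g*h) :=
      mul_le_mul (mul_le_mul_of_nonneg_right hcb h6) h3 (by positivity)
        (mul_nonneg hbc' h6)
    have key2 : (c1+bm1)*(u*(2*a1+am1))*dm1 ≤ ((b1+bm1)+(c1+cm1))*(g*h)*dm1 :=
      mul_le_mul_of_nonneg_right
        (mul_le_mul hcb h4 (mul_nonneg h6 h7) hbc') hdm1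
    have hun : u + dm1 ≤ (a1+am1)+(b1+bm1)+(c1+cm1)+(d1+dm1) := by
      simp only [hudef]; linarith
    have key3 : ((b1+bm1)+(c1+cm1))*(u+dm1)*(g*h) ≤
        ((b1+bm1)+(c1+cm1))*((a1+am1)+(b1+bm1)+(c1+cm1)+(d1+dm1))*(g*h) :=
      mul_le_mul_of_nonneg_right (mul_le_mul_of_nonneg_left hun hbc') (mul_nonneg hg0 hh0)
    have step2 : (c1+bm1)*u*(2*a1+am1)*((a1+am1)*(d1+dm1))
        ≤ ((b1+bm1)+(c1+cm1)) * ((a1+am1)+(b1+bm1)+(c1+cm1)+(d1+dm1)) * (a1+am1) * g * h := by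
      have e2 : (c1+bm1)*u*((2*a1+am1)*d1)*(a1+am1) ≤ ((b1+bm1)+(c1+cm1))*u*(g*h)*(a1+am1) :=
        mul_le_mul_of_nonneg_right key1 (by positivity)
      have e3 : (c1+bm1)*(u*(2*a1+am1))*dm1*(a1+am1) ≤ ((b1+bm1)+(c1+cm1))*(g*h)*dm1*(a1+am1) :=
        mul_le_mul_of_nonneg_right key2 (by positivity)
      have e4 : ((b1+bm1)+(c1+cm1))*(u+dm1)*(g*h)*(a1+am1) ≤
          ((b1+bm1)+(c1+cm1))*((a1+am1)+(b1+bm1)+(c1+cm1)+(d1+dm1))*(g*h)*(a1+am1) :=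
        mul_le_mul_of_nonneg_right key3 (by positivity)
      linarith [e2, e3, e4]
    linarith [step1, step2]

set_option maxHeartbeats 1000000 in
theorem deltaF_bound_precision_p (a1 b1 c1 d1 am1 bm1 cm1 dm1 p T : ℝ)
    (ha1 : 0 ≤ a1) (hb1 : 0 ≤ b1) (hc1 : 0 ≤ c1) (hd1 : 0 ≤ d1)
    (ham1 : 0 ≤ am1) (hbm1 : 0 ≤ bm1) (hcm1 : 0 ≤ cm1) (hdm1 : 0 ≤ dm1)
    (hp : p ∈ Set.Ioo (0:ℝ) 1)
    (hg : 0 < 2*(a1+c1) + b1 + d1 + am1 + cm1)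
    (hh : 0 < 2*(a1+b1) + c1 + d1 + am1 + bm1)
    (h1 : 0 < 2*(a1+am1) + (b1+bm1) + (c1+cm1))
    (h2 : 0 < ((a1+am1)+(b1+bm1))*((b1+bm1)+(d1+dm1))
            + ((a1+am1)+(c1+cm1))*((c1+cm1)+(d1+dm1)))
    (ha : 0 < a1 + am1)
    (hprec : a1 / (a1 + am1) = p)
    (hT : 0 < T)
    (hK : T < 2*((a1+am1)*(d1+dm1) - (b1+bm1)*(c1+cm1))
            / (((a1+am1)+(b1+bm1))*((b1+bm1)+(d1+dm1))
               + ((a1+am1)+(c1+cm1))*((c1+cm1)+(d1+dm1)))) :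
    |2*(a1+c1) / (2*(a1+c1) + b1 + d1 + am1 + cm1)
      - 2*(a1+b1) / (2*(a1+b1) + c1 + d1 + am1 + bm1)|
    ≤ 4*(1-T)/((p+1)*T) := by
  set D := ((a1+am1)+(b1+bm1))*((b1+bm1)+(d1+dm1))
            + ((a1+am1)+(c1+cm1))*((c1+cm1)+(d1+dm1)) with hDdef
  have hTD : T * D < 2*((a1+am1)*(d1+dm1) - (b1+bm1)*(c1+cm1)) := by
    rw [lt_div_iff₀ h2] at hK; linarith
  have hA0 : 0 < (a1+am1)*(d1+dm1) - (b1+bm1)*(c1+cm1) := by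
    nlinarith [mul_pos hT h2]
  have hident : 2*((a1+am1)*(d1+dm1) - (b1+bm1)*(c1+cm1))
      = D - ((b1+bm1)+(c1+cm1))*((a1+am1)+(b1+bm1)+(c1+cm1)+(d1+dm1)) := by
    simp only [hDdef]; ring
  have hs3 : ((b1+bm1)+(c1+cm1))*((a1+am1)+(b1+bm1)+(c1+cm1)+(d1+dm1)) ≤ (1-T)*D := by
    nlinarith
  have hbcn0 : 0 ≤ ((b1+bm1)+(c1+cm1))*((a1+am1)+(b1+bm1)+(c1+cm1)+(d1+dm1)) := by positivity
  have hT1 : T < 1 := by nlinarith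
  set g := 2*(a1+c1) + b1 + d1 + am1 + cm1 with hgdef
  set h := 2*(a1+b1) + c1 + d1 + am1 + bm1 with hhdef
  set N := (a1+c1)*h - (a1+b1)*g with hNdef
  have hgh : 0 < g * h := mul_pos hg hh
  have hp0 : 0 < p := hp.1
  have hpt : 0 < (p+1)*T := by positivity
  have hdiff : 2*(a1+c1) / g - 2*(a1+b1) / h = 2*N/(g*h) := by
    field_simp [hNdef]; ring
  rw [hdiff, abs_div, abs_of_pos hgh, div_le_div_iff₀ hgh hpt]
  -- goal : |2*N| * ((p+1)*T) ≤ 4*(1-T)*(g*h)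
  have KEY : |N| * (2*a1+am1)*((a1+am1)*(d1+dm1) - (b1+bm1)*(c1+cm1))
      ≤ ((b1+bm1)+(c1+cm1))*((a1+am1)+(b1+bm1)+(c1+cm1)+(d1+dm1))*(a1+am1)*g*h := by
    rcases abs_cases N with ⟨hE, _⟩ | ⟨hE, _⟩ <;> rw [hE]
    · have := key_ineq a1 b1 c1 d1 am1 bm1 cm1 dm1 ha1 hb1 hc1 hd1 ham1 hbm1 hcm1 hdm1 hA0.le
      simp only [hNdef, hgdef, hhdef]
      linarith [this]
    · have := key_ineq a1 c1 b1 d1 am1 cm1 bm1 dm1 ha1 hc1 hb1 hd1 ham1 hcm1 hbm1 hdm1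
        (by linarith [hA0] : 0 ≤ (a1+am1)*(d1+dm1) - (c1+cm1)*(b1+bm1))
      simp only [hNdef, hgdef, hhdef]
      linarith [this]
  have hL0 : 0 ≤ |N| * (2*a1+am1) := by positivity
  have s1 : |N| * (2*a1+am1)*(T*D) ≤ |N| * (2*a1+am1)*(2*((a1+am1)*(d1+dm1) - (b1+bm1)*(c1+cm1))) :=
    mul_le_mul_of_nonneg_left hTD.le hL0
  have hagh0 : 0 ≤ (a1+am1)*g*h := by positivity
  have s4 : ((b1+bm1)+(c1+cm1))*((a1+am1)+(b1+bm1)+(c1+cm1)+(d1+dm1))*((a1+am1)*g*h)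
      ≤ (1-T)*D*((a1+am1)*g*h) := mul_le_mul_of_nonneg_right hs3 hagh0
  have final : |N| * (2*a1+am1)*T*D ≤ 2*(1-T)*((a1+am1)*g*h)*D := by linarith [s1, KEY, s4]
  have final2 : |N| * (2*a1+am1)*T ≤ 2*(1-T)*((a1+am1)*g*h) :=
    le_of_mul_le_mul_right (by linarith [final]) h2
  have h2n : |2*N| = 2*|N| := by rw [abs_mul]; norm_num
  have hp1 : (p+1)*(a1+am1) = 2*a1+am1 := by
    rw [← hprec]; field_simp; ring
  have e : |2*N| * ((p+1)*T)*(a1+am1) = 2*(|N| * (2*a1+am1)*T) := by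
    rw [h2n, ← hp1]; ring
  have e2 : 4*(1-T)*(g*h)*(a1+am1) = 2*(2*(1-T)*((a1+am1)*g*h)) := by ring
  have := mul_le_mul_of_nonneg_left final2 (by norm_num : (0:ℝ) ≤ 2)
  rw [← mul_le_mul_iff_of_pos_right ha, e, e2]
  linarith [this]
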